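/- Let A be a finite poset, a ∈ A, and let j : A∖{a} → A be the inclusion. Then: (1) a is a linear point of A if and only if j admits a left adjoint, i.e. there exists an order-preserving r : A → A∖{a} with r ⊣ j; moreover in that case r = r_{a↑} (the map fixing every b ≠ a and sending a to a↑). (2) a is a colinear point of A if and only if j admits a right adjoint, i.e. there exists an order-preserving r : A → A∖{a} with j ⊣ r; moreover in that case r = r_{a↓} (the map fixing every b ≠ a and sending a to a↓). -/
import Mathlib


-- Let `A` be a finite poset, `a ∈ A`, and `j : A∖{a} → A` the inclusion (`Subtype.val`).
-- (1) `a` is a linear point (there is `aUp > a` with every `b > a` satisfying `b ≥ aUp`)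
--     iff `j` admits a left adjoint, i.e. an order-preserving `r : A → A∖{a}` with `r ⊣ j`
--     (`r x ≤ y ↔ x ≤ j y`); moreover any such `r` fixes every `b ≠ a` and sends `a` to `aUp`.
-- (2) `a` is a colinear point (there is `aDn < a` with every `b < a` satisfying `b ≤ aDn`)
--     iff `j` admits a right adjoint, i.e. an order-preserving `r : A → A∖{a}` with `j ⊣ r`
--     (`j y ≤ x ↔ y ≤ r x`); moreover any such `r` fixes every `b ≠ a` and sends `a` to `aDn`.
theorem stmt5 {A : Type*} [PartialOrder A] [Fintype A] (a : A) :
    ((∃ aUp : A, a < aUp ∧ ∀ b : A, a < b → aUp ≤ b) ↔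
      ∃ r : A → {b : A // b ≠ a}, Monotone r ∧
        ∀ (x : A) (y : {b : A // b ≠ a}), r x ≤ y ↔ x ≤ (y : A)) ∧
    (∀ (aUp : A), a < aUp → (∀ b : A, a < b → aUp ≤ b) →
      ∀ r : A → {b : A // b ≠ a},
        (∀ (x : A) (y : {b : A // b ≠ a}), r x ≤ y ↔ x ≤ (y : A)) →
        (∀ (b : A) (_ : b ≠ a), ((r b : A)) = b) ∧ ((r a : A)) = aUp) ∧
    ((∃ aDn : A, aDn < a ∧ ∀ b : A, b < a → b ≤ aDn) ↔
      ∃ r : A → {b : A // b ≠ a}, Monotone r ∧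
        ∀ (y : {b : A // b ≠ a}) (x : A), (y : A) ≤ x ↔ y ≤ r x) ∧
    (∀ (aDn : A), aDn < a → (∀ b : A, b < a → b ≤ aDn) →
      ∀ r : A → {b : A // b ≠ a},
        (∀ (y : {b : A // b ≠ a}) (x : A), (y : A) ≤ x ↔ y ≤ r x) →
        (∀ (b : A) (_ : b ≠ a), ((r b : A)) = b) ∧ ((r a : A)) = aDn) := by
  classical
  constructor
  · constructor
    · rintro ⟨aUp, hlt, hmin⟩
      refine ⟨fun x => if h : x = a then ⟨aUp, (ne_of_gt hlt)⟩ else ⟨x, h⟩, ?_⟩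
      have hadj : ∀ (x : A) (y : {b : A // b ≠ a}),
          (if h : x = a then (⟨aUp, (ne_of_gt hlt)⟩ : {b : A // b ≠ a}) else ⟨x, h⟩) ≤ y ↔ x ≤ (y : A) := by
        intro x y
        by_cases hx : x = a
        · subst hx
          rw [dif_pos rfl]
          rw [← Subtype.coe_le_coe]
          constructor
          · intro h; exact le_trans (le_of_lt hlt) h
          · intro h; exact hmin _ (lt_of_le_of_ne h (Ne.symm y.2))
        · rw [dif_neg hx, ← Subtype.coe_le_coe]
      refine ⟨?_, hadj⟩
      intro x y hxy
      exact (hadj x _).mpr (le_trans hxy ((hadj y _).mp le_rfl))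
    · rintro ⟨r, _, hadj⟩
      refine ⟨(r a : A), ?_, ?_⟩
      · exact lt_of_le_of_ne ((hadj a (r a)).mp le_rfl) (Ne.symm (r a).2)
      · intro b hb
        exact (hadj a ⟨b, (ne_of_gt hb)⟩).mpr (le_of_lt hb)
  refine ⟨?_, ?_, ?_⟩
  · intro aUp hlt hmin r hadj
    constructor
    · intro b hb
      exact le_antisymm ((hadj b ⟨b, hb⟩).mpr le_rfl) ((hadj b (r b)).mp le_rfl)
    · have h1 : (r a : A) ≤ aUp := (hadj a ⟨aUp, ne_of_gt hlt⟩).mpr (le_of_lt hlt)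
      have h2 : a < (r a : A) :=
        lt_of_le_of_ne ((hadj a (r a)).mp le_rfl) (Ne.symm (r a).2)
      exact le_antisymm h1 (hmin _ h2)
  · constructor
    · rintro ⟨aDn, hlt, hmax⟩
      refine ⟨fun x => if h : x = a then ⟨aDn, (ne_of_lt hlt)⟩ else ⟨x, h⟩, ?_⟩
      have hadj : ∀ (y : {b : A // b ≠ a}) (x : A),
          (y : A) ≤ x ↔ y ≤ (if h : x = a then (⟨aDn, (ne_of_lt hlt)⟩ : {b : A // b ≠ a}) else ⟨x, h⟩) := by
        intro y x
        by_cases hx : x = a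
        · subst hx
          rw [dif_pos rfl]
          rw [← Subtype.coe_le_coe]
          constructor
          · intro h; exact hmax _ (lt_of_le_of_ne h y.2)
          · intro h; exact le_trans h (le_of_lt hlt)
        · rw [dif_neg hx, ← Subtype.coe_le_coe]
      refine ⟨?_, hadj⟩
      intro x y hxy
      exact (hadj _ y).mp (le_trans ((hadj _ x).mpr le_rfl) hxy)
    · rintro ⟨r, _, hadj⟩
      refine ⟨(r a : A), ?_, ?_⟩
      · exact lt_of_le_of_ne ((hadj (r a) a).mpr le_rfl) (r a).2
      · intro b hb
        exact (hadj ⟨b, ne_of_lt hb⟩ a).mp (le_of_lt hb)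
  · intro aDn hlt hmax r hadj
    constructor
    · intro b hb
      exact le_antisymm ((hadj (r b) b).mpr le_rfl) ((hadj ⟨b, hb⟩ b).mp le_rfl)
    · have h1 : aDn ≤ (r a : A) := (hadj ⟨aDn, ne_of_lt hlt⟩ a).mp (le_of_lt hlt)
      have h2 : (r a : A) < a :=
        lt_of_le_of_ne ((hadj (r a) a).mpr le_rfl) (r a).2
      exact le_antisymm (hmax _ h2) h1
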